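/- Let f be a probability mass function on ℤ^d with finite second moment, and suppose that for every coordinate r ∈ {1,...,d} there exists a point x_r ∈ ℤ^d with f(x_r) > 0 and f(x_r + e_r) > 0, where e_r is the r-th standard basis vector. Then the covariance matrix of f is positive definite. -/

import Mathlib

open Matrix in

/-- If a probability mass function `f` on `ℤ^d` with finite first and second moments gives,
for every coordinate `r`, positive mass to some point `x_r` and to `x_r + e_r`, then the
covariance matrix of `f` is positive definite. -/
theorem covariance_posDef (d : ℕ) (f : (Fin d → ℤ) → ℝ)
    (hf : ∀ x, 0 ≤ f x) (hsum : HasSum f 1)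
    (hmom1 : ∀ i : Fin d, Summable (fun x : Fin d → ℤ => f x * (x i : ℝ)))
    (hmom2 : ∀ i j : Fin d, Summable (fun x : Fin d → ℤ => f x * (x i : ℝ) * (x j : ℝ)))
    (hcoord : ∀ r : Fin d, ∃ x : Fin d → ℤ, 0 < f x ∧ 0 < f (x + Pi.single r 1)) :
    Matrix.PosDef (Matrix.of fun i j : Fin d =>
      ∑' x : Fin d → ℤ,
        f x * ((x i : ℝ) - ∑' y : Fin d → ℤ, f y * (y i : ℝ))
            * ((x j : ℝ) - ∑' y : Fin d → ℤ, f y * (y j : ℝ))) := by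
  set m : Fin d → ℝ := fun i => ∑' y : Fin d → ℤ, f y * (y i : ℝ) with hm
  have hsummable : ∀ i j : Fin d,
      Summable (fun x : Fin d → ℤ => f x * ((x i : ℝ) - m i) * ((x j : ℝ) - m j)) := by
    intro i j
    have h := ((hmom2 i j).sub ((hmom1 i).mul_left (m j))).sub
      (((hmom1 j).mul_left (m i)).sub (hsum.summable.mul_left (m i * m j)))
    exact h.congr fun x => by ring
  set S : (Fin d → ℤ) → (Fin d → ℝ) → ℝ :=
    fun x v => ∑ i, v i * ((x i : ℝ) - m i) with hS
  have hterm : ∀ (v : Fin d → ℝ) (x : Fin d → ℤ),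
      f x * (S x v) ^ 2
        = ∑ i, ∑ j, v i * (f x * ((x i : ℝ) - m i) * ((x j : ℝ) - m j)) * v j := by
    intro v x
    rw [hS, sq, Finset.sum_mul_sum, Finset.mul_sum]
    refine Finset.sum_congr rfl fun i _ => ?_
    rw [Finset.mul_sum]
    exact Finset.sum_congr rfl fun j _ => by ring
  have hSsummable : ∀ (v : Fin d → ℝ) (i j : Fin d),
      Summable (fun x : Fin d → ℤ =>
        v i * (f x * ((x i : ℝ) - m i) * ((x j : ℝ) - m j)) * v j) :=
    fun v i j => ((hsummable i j).mul_left (v i)).mul_right (v j)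
  have hsum2 : ∀ v : Fin d → ℝ, Summable (fun x : Fin d → ℤ => f x * (S x v) ^ 2) := by
    intro v
    refine Summable.congr ?_ fun x => (hterm v x).symm
    exact summable_sum fun i _ => summable_sum fun j _ => hSsummable v i j
  have key : ∀ v : Fin d → ℝ,
      star v ⬝ᵥ ((Matrix.of fun i j : Fin d =>
        ∑' x : Fin d → ℤ,
          f x * ((x i : ℝ) - m i) * ((x j : ℝ) - m j)) *ᵥ v)
        = ∑' x : Fin d → ℤ, f x * (S x v) ^ 2 := by
    intro v
    calc star v ⬝ᵥ _
        = ∑ i, ∑ j, v i * (∑' x : Fin d → ℤ,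
            f x * ((x i : ℝ) - m i) * ((x j : ℝ) - m j)) * v j := by
          simp only [dotProduct, Matrix.mulVec, Pi.star_apply, star_trivial,
            Matrix.of_apply, Finset.mul_sum]
          exact Finset.sum_congr rfl fun i _ => Finset.sum_congr rfl fun j _ => by ring
      _ = ∑ i, ∑ j, ∑' x : Fin d → ℤ,
            v i * (f x * ((x i : ℝ) - m i) * ((x j : ℝ) - m j)) * v j := by
          refine Finset.sum_congr rfl fun i _ => Finset.sum_congr rfl fun j _ => ?_
          rw [← tsum_mul_left, ← tsum_mul_right]
      _ = ∑ i, ∑' x : Fin d → ℤ, ∑ j,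
            v i * (f x * ((x i : ℝ) - m i) * ((x j : ℝ) - m j)) * v j :=
          Finset.sum_congr rfl fun i _ => (Summable.tsum_finsetSum fun j _ => hSsummable v i j).symm
      _ = ∑' x : Fin d → ℤ, ∑ i, ∑ j,
            v i * (f x * ((x i : ℝ) - m i) * ((x j : ℝ) - m j)) * v j :=
          (Summable.tsum_finsetSum fun i _ =>
            summable_sum fun j _ => hSsummable v i j).symm
      _ = ∑' x : Fin d → ℤ, f x * (S x v) ^ 2 :=
          tsum_congr fun x => (hterm v x).symm
  rw [Matrix.posDef_iff_dotProduct_mulVec]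
  constructor
  · ext i j
    simp only [Matrix.conjTranspose_apply, Matrix.of_apply, star_trivial]
    exact tsum_congr fun x => by ring
  · intro v hv
    rw [key v]
    obtain ⟨r, hr⟩ := Function.ne_iff.mp hv
    obtain ⟨x0, hx0, hx1⟩ := hcoord r
    have hdiff : S (x0 + Pi.single r 1) v - S x0 v = v r := by
      rw [hS, ← Finset.sum_sub_distrib]
      have : ∀ i : Fin d,
          v i * (((x0 + Pi.single r 1 : Fin d → ℤ) i : ℝ) - m i) - v i * ((x0 i : ℝ) - m i)
            = if i = r then v i else 0 := by
        intro i
        simp only [Pi.add_apply, Pi.single_apply]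
        rcases eq_or_ne i r with h | h <;> simp [h] <;> ring
      rw [Finset.sum_congr rfl fun i _ => this i]
      simp [Finset.sum_ite_eq']
    have hpos : ∃ x : Fin d → ℤ, 0 < f x * (S x v) ^ 2 := by
      by_cases h : S x0 v = 0
      · refine ⟨x0 + Pi.single r 1, ?_⟩
        have hne : S (x0 + Pi.single r 1) v ≠ 0 := by
          intro h'
          rw [h', h] at hdiff
          simp at hdiff
          exact hr hdiff.symm
        exact mul_pos hx1 (by positivity)
      · exact ⟨x0, mul_pos hx0 (by positivity)⟩
    obtain ⟨x, hx⟩ := hpos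
    exact Summable.tsum_pos (hsum2 v) (fun y => mul_nonneg (hf y) (sq_nonneg _)) x hx
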